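/- Let X be a nonempty set, W = W(X) the free monoid on X, and F = A × W the free right W-act with basis A, equipped with degree functions deg_X : X → ℕ with deg_X(x) ≥ 1 for all x ∈ X and deg_A : A → ℕ, extended additively to W and by deg(a,w) = deg_A(a) + deg(w) to F. Let P and Q be subacts of F such that for every n ∈ ℕ the sets of elements of degree n in P and in Q are finite. Then for every n ∈ ℕ the sets of elements of degree n in the canonical bases B_P, B_Q, B_{P∪Q}, B_{P∩Q} are finite and c_n(B_P) + c_n(B_Q) = c_n(B_{P∪Q}) + c_n(B_{P∩Q}); equivalently H(B_P,t) + H(B_Q,t) = H(B_{P∪Q},t) + H(B_{P∩Q},t). -/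
import Mathlib


/-- A subset `P` of the free right act `F = A × W(X)` (with action `(a,w)·u = (a, w*u)`)
is a subact if it is closed under the action of the free monoid `W(X)`. -/
def IsSubact {A X : Type*} (P : Set (A × FreeMonoid X)) : Prop :=
  ∀ p ∈ P, ∀ u : FreeMonoid X, (p.1, p.2 * u) ∈ P

/-- The canonical basis of a subact `P` of the free act `A × W(X)`. -/
def canonicalBasis {A X : Type*} (P : Set (A × FreeMonoid X)) : Set (A × FreeMonoid X) :=
  {p | p ∈ P ∧ (p.2 = 1 ∨
    ∃ (w : FreeMonoid X) (x : X), p.2 = w * FreeMonoid.of x ∧ (p.1, w) ∉ P)}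

/-- The additive extension of a degree function `degX : X → ℕ` to the free monoid `W(X)`. -/
def monoidDeg {X : Type*} (degX : X → ℕ) (w : FreeMonoid X) : ℕ :=
  ((FreeMonoid.toList w).map degX).sum

/-- The degree of an element `(a,w)` of the free act `A × W(X)`:
`deg (a,w) = deg_A a + deg w`. -/
def actDeg {A X : Type*} (degA : A → ℕ) (degX : X → ℕ) (p : A × FreeMonoid X) : ℕ :=
  degA p.1 + monoidDeg degX p.2

section Aux

variable {A X : Type*}

lemma freeMonoid_concat_ne_one (w : FreeMonoid X) (x : X) : w * FreeMonoid.of x ≠ 1 := by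
  intro h
  have h2 := congrArg FreeMonoid.toList h
  simp at h2

lemma freeMonoid_concat_inj {w w' : FreeMonoid X} {x x' : X}
    (h : w * FreeMonoid.of x = w' * FreeMonoid.of x') : w = w' ∧ x = x' := by
  have h2 := congrArg FreeMonoid.toList h
  simp [← List.concat_eq_append] at h2
  rw [List.concat_inj] at h2
  exact ⟨FreeMonoid.toList.injective h2.1, h2.2⟩

lemma freeMonoid_eq_one_or_concat (w : FreeMonoid X) :
    w = 1 ∨ ∃ w' x, w = w' * FreeMonoid.of x := by
  rcases List.eq_nil_or_concat (FreeMonoid.toList w) with h | ⟨l, x, h⟩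
  · left; exact FreeMonoid.toList.injective (by simpa using h)
  · right
    exact ⟨FreeMonoid.ofList l, x,
      FreeMonoid.toList.injective (by simpa [List.concat_eq_append] using h)⟩

lemma mem_basis_one (P : Set (A × FreeMonoid X)) (a : A) :
    (a, (1 : FreeMonoid X)) ∈ canonicalBasis P ↔ (a, (1 : FreeMonoid X)) ∈ P :=
  ⟨fun h => h.1, fun h => ⟨h, Or.inl rfl⟩⟩

lemma mem_basis_concat (P : Set (A × FreeMonoid X)) (a : A) (w : FreeMonoid X) (x : X) :
    (a, w * FreeMonoid.of x) ∈ canonicalBasis P ↔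
      ((a, w * FreeMonoid.of x) ∈ P ∧ (a, w) ∉ P) := by
  constructor
  · rintro ⟨hp, h | ⟨w', x', heq, hnot⟩⟩
    · exact absurd h (freeMonoid_concat_ne_one w x)
    · obtain ⟨rfl, rfl⟩ := freeMonoid_concat_inj heq
      exact ⟨hp, hnot⟩
  · rintro ⟨hp, hn⟩
    exact ⟨hp, Or.inr ⟨w, x, rfl, hn⟩⟩

open Classical in
lemma basis_indicator_key (P Q : Set (A × FreeMonoid X)) (hP : IsSubact P) (hQ : IsSubact Q)
    (p : A × FreeMonoid X) :
    (if p ∈ canonicalBasis P then 1 else 0) + (if p ∈ canonicalBasis Q then 1 else 0)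
    = (if p ∈ canonicalBasis (P ∪ Q) then 1 else 0)
      + (if p ∈ canonicalBasis (P ∩ Q) then (1 : ℕ) else 0) := by
  obtain ⟨a, w⟩ := p
  rcases freeMonoid_eq_one_or_concat w with rfl | ⟨w', x, rfl⟩
  · by_cases h1 : (a, (1 : FreeMonoid X)) ∈ P <;>
      by_cases h2 : (a, (1 : FreeMonoid X)) ∈ Q <;>
      simp [mem_basis_one, h1, h2, Set.mem_union, Set.mem_inter_iff]
  · have hPim : (a, w') ∈ P → (a, w' * FreeMonoid.of x) ∈ P :=
      fun h => hP (a, w') h (FreeMonoid.of x)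
    have hQim : (a, w') ∈ Q → (a, w' * FreeMonoid.of x) ∈ Q :=
      fun h => hQ (a, w') h (FreeMonoid.of x)
    by_cases hA1 : (a, w' * FreeMonoid.of x) ∈ P <;>
      by_cases hB1 : (a, w') ∈ P <;>
      by_cases hA2 : (a, w' * FreeMonoid.of x) ∈ Q <;>
      by_cases hB2 : (a, w') ∈ Q <;>
      first
        | exact absurd (hPim hB1) hA1
        | exact absurd (hQim hB2) hA2
        | simp [mem_basis_concat, Set.mem_union, Set.mem_inter_iff, hA1, hB1, hA2, hB2]

end Aux

/-- Grassmann-type formula for the Hilbert series of the canonical bases of subacts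
of a free act over a free monoid:
`H(B_P,t) + H(B_Q,t) = H(B_{P∪Q},t) + H(B_{P∩Q},t)`, coefficientwise. -/
theorem hilbert_series_union_inter_subacts {A X : Type*} [Nonempty X]
    (degX : X → ℕ) (degA : A → ℕ) (hdegX : ∀ x, 1 ≤ degX x)
    (P Q : Set (A × FreeMonoid X)) (hP : IsSubact P) (hQ : IsSubact Q)
    (hPfin : ∀ n : ℕ, {p | p ∈ P ∧ actDeg degA degX p = n}.Finite)
    (hQfin : ∀ n : ℕ, {p | p ∈ Q ∧ actDeg degA degX p = n}.Finite) :
    ∀ n : ℕ,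
      {b | b ∈ canonicalBasis P ∧ actDeg degA degX b = n}.Finite ∧
      {b | b ∈ canonicalBasis Q ∧ actDeg degA degX b = n}.Finite ∧
      {b | b ∈ canonicalBasis (P ∪ Q) ∧ actDeg degA degX b = n}.Finite ∧
      {b | b ∈ canonicalBasis (P ∩ Q) ∧ actDeg degA degX b = n}.Finite ∧
      {b | b ∈ canonicalBasis P ∧ actDeg degA degX b = n}.ncard
        + {b | b ∈ canonicalBasis Q ∧ actDeg degA degX b = n}.ncard =
      {b | b ∈ canonicalBasis (P ∪ Q) ∧ actDeg degA degX b = n}.ncard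
        + {b | b ∈ canonicalBasis (P ∩ Q) ∧ actDeg degA degX b = n}.ncard := by
  classical
  intro n
  have hUfin : {p | p ∈ P ∪ Q ∧ actDeg degA degX p = n}.Finite := by
    have heq : {p | p ∈ P ∪ Q ∧ actDeg degA degX p = n}
        = {p | p ∈ P ∧ actDeg degA degX p = n} ∪ {p | p ∈ Q ∧ actDeg degA degX p = n} := by
      ext p
      simp only [Set.mem_setOf_eq, Set.mem_union]
      tauto
    rw [heq]
    exact (hPfin n).union (hQfin n)
  have s1 : {b | b ∈ canonicalBasis P ∧ actDeg degA degX b = n}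
      ⊆ {p | p ∈ P ∪ Q ∧ actDeg degA degX p = n} :=
    fun p hp => ⟨Or.inl hp.1.1, hp.2⟩
  have s2 : {b | b ∈ canonicalBasis Q ∧ actDeg degA degX b = n}
      ⊆ {p | p ∈ P ∪ Q ∧ actDeg degA degX p = n} :=
    fun p hp => ⟨Or.inr hp.1.1, hp.2⟩
  have s3 : {b | b ∈ canonicalBasis (P ∪ Q) ∧ actDeg degA degX b = n}
      ⊆ {p | p ∈ P ∪ Q ∧ actDeg degA degX p = n} :=
    fun p hp => ⟨hp.1.1, hp.2⟩
  have s4 : {b | b ∈ canonicalBasis (P ∩ Q) ∧ actDeg degA degX b = n}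
      ⊆ {p | p ∈ P ∪ Q ∧ actDeg degA degX p = n} :=
    fun p hp => ⟨Or.inl hp.1.1.1, hp.2⟩
  have f1 := hUfin.subset s1
  have f2 := hUfin.subset s2
  have f3 := hUfin.subset s3
  have f4 := hUfin.subset s4
  refine ⟨f1, f2, f3, f4, ?_⟩
  set T : Finset (A × FreeMonoid X) := hUfin.toFinset with hT
  have card_eq : ∀ (S : Set (A × FreeMonoid X)) (hS : S.Finite),
      S ⊆ {p | p ∈ P ∪ Q ∧ actDeg degA degX p = n} →
      S.ncard = ∑ p ∈ T, (if p ∈ S then 1 else 0) := by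
    intro S hS hsub
    rw [← Finset.card_filter]
    rw [Set.ncard_eq_toFinset_card _ hS]
    congr 1
    ext p
    simp only [Finset.mem_filter, hT, Set.Finite.mem_toFinset]
    exact ⟨fun h => ⟨hsub h, h⟩, fun h => h.2⟩
  rw [card_eq _ f1 s1, card_eq _ f2 s2, card_eq _ f3 s3, card_eq _ f4 s4,
    ← Finset.sum_add_distrib, ← Finset.sum_add_distrib]
  apply Finset.sum_congr rfl
  intro p _
  have key := basis_indicator_key P Q hP hQ p
  by_cases hd : actDeg degA degX p = n
  · simpa [Set.mem_setOf_eq, hd] using key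
  · simp [Set.mem_setOf_eq, hd]
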